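/- Let ν, m, l ∈ ℕ, let W_x ∈ ℝ^{ν×ν}, W_y ∈ ℝ^{ν×l}, W_{out1} ∈ ℝ^{l×ν}, W_{out2} ∈ ℝ^{l×m}, and set W_x* = W_x + W_y W_{out1}. Let A ∈ ℝ^{(ν+m)×(ν+m)} be the block matrix A = [[W_x*, W_y W_{out2}], [0_{m,ν}, 0_{m,m}]]. If the ℓ²-operator norm satisfies ‖W_x*‖ < 1, then there exists a symmetric positive definite matrix P = diag(P1, P2) ∈ ℝ^{(ν+m)×(ν+m)}, where P1 ∈ ℝ^{ν×ν} is diagonal and P2 ∈ ℝ^{m×m} is symmetric, such that A^T P A − P is negative definite. -/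

import Mathlib

open Matrix
open scoped Matrix.Norms.L2Operator

/-- Symmetric positive definiteness of a real matrix. -/
def PosDefM {ι : Type*} [Fintype ι] (P : Matrix ι ι ℝ) : Prop :=
  Pᵀ = P ∧ ∀ v : ι → ℝ, v ≠ 0 → 0 < v ⬝ᵥ (P *ᵥ v)

/-- Negative definiteness of a real matrix. -/
def NegDefM {ι : Type*} [Fintype ι] (Q : Matrix ι ι ℝ) : Prop :=
  ∀ v : ι → ℝ, v ≠ 0 → v ⬝ᵥ (Q *ᵥ v) < 0

lemma scalar_key {a b s t : ℝ} (ha0 : 0 ≤ a) (ha : a < 1) (hb : 0 ≤ b)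
    (hs : 0 ≤ s) (ht : 0 ≤ t) (hst : 0 < s ∨ 0 < t) :
    (a*s + b*t)^2 < s^2 + (2*b^2/(1-a^2)+1)*t^2 := by
  have hD : 0 < 1 - a^2 := by nlinarith
  have key : (1-a^2)*((a*s+b*t)^2) < (1-a^2)*s^2 + (2*b^2 + (1-a^2))*t^2 := by
    rcases hst with h | h
    · nlinarith [sq_nonneg ((1-a^2)*s - 2*a*b*t),
        mul_pos (mul_pos hD hD) (mul_pos h h),
        mul_nonneg (mul_nonneg hD.le (mul_nonneg hb hb)) (mul_nonneg ht ht),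
        mul_nonneg hD.le (mul_nonneg ht ht)]
    · nlinarith [sq_nonneg ((1-a^2)*s - 2*a*b*t),
        mul_nonneg (mul_nonneg hD.le hD.le) (mul_nonneg hs hs),
        mul_nonneg (mul_nonneg hD.le (mul_nonneg hb hb)) (mul_nonneg ht ht),
        mul_pos hD (mul_pos h h)]
  have h1 : (a*s+b*t)^2 = (1-a^2)*((a*s+b*t)^2) / (1-a^2) := by field_simp
  have h2 : s^2 + (2*b^2/(1-a^2)+1)*t^2 = ((1-a^2)*s^2 + (2*b^2 + (1-a^2))*t^2)/(1-a^2) := by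
    field_simp
  rw [h1, h2]
  exact (div_lt_div_iff_of_pos_right hD).mpr key

/-- dot product of a real vector with itself equals the squared Euclidean norm. -/
lemma dot_self_eq_norm_sq {n : ℕ} (u : Fin n → ℝ) :
    u ⬝ᵥ u = ‖(WithLp.equiv 2 (Fin n → ℝ)).symm u‖^2 := by
  rw [← real_inner_self_eq_norm_sq, WithLp.equiv_symm_apply, EuclideanSpace.inner_toLp_toLp]
  rfl

lemma dot_self_nonneg {n : ℕ} (u : Fin n → ℝ) : 0 ≤ u ⬝ᵥ u :=
  Finset.sum_nonneg fun i _ => mul_self_nonneg _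

lemma norm_pos_of_ne {n : ℕ} {u : Fin n → ℝ} (h : u ≠ 0) :
    0 < ‖(WithLp.equiv 2 (Fin n → ℝ)).symm u‖ := by
  rw [norm_pos_iff]
  intro h0
  exact h (by simpa using congrArg (WithLp.equiv 2 (Fin n → ℝ)) h0)

lemma mulVec_norm_le {n p : ℕ} (M : Matrix (Fin p) (Fin n) ℝ) (u : Fin n → ℝ) :
    ‖(WithLp.equiv 2 (Fin p → ℝ)).symm (M *ᵥ u)‖
      ≤ ‖M‖ * ‖(WithLp.equiv 2 (Fin n → ℝ)).symm u‖ :=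
  M.l2_opNorm_mulVec ((WithLp.equiv 2 (Fin n → ℝ)).symm u)

theorem esn_condition_implies_structured_lyapunov
    (ν m l : ℕ)
    (Wx : Matrix (Fin ν) (Fin ν) ℝ) (Wy : Matrix (Fin ν) (Fin l) ℝ)
    (Wout1 : Matrix (Fin l) (Fin ν) ℝ) (Wout2 : Matrix (Fin l) (Fin m) ℝ)
    (hnorm : ‖Wx + Wy * Wout1‖ < 1) :
    ∃ (P1 : Fin ν → ℝ) (P2 : Matrix (Fin m) (Fin m) ℝ),
      P2ᵀ = P2 ∧
      PosDefM (Matrix.fromBlocks (Matrix.diagonal P1) 0 0 P2) ∧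
      NegDefM
        ((Matrix.fromBlocks (Wx + Wy * Wout1) (Wy * Wout2) 0 0)ᵀ
            * Matrix.fromBlocks (Matrix.diagonal P1) 0 0 P2
            * Matrix.fromBlocks (Wx + Wy * Wout1) (Wy * Wout2) 0 0
          - Matrix.fromBlocks (Matrix.diagonal P1) 0 0 P2) := by
  set W : Matrix (Fin ν) (Fin ν) ℝ := Wx + Wy * Wout1 with hW
  set V : Matrix (Fin ν) (Fin m) ℝ := Wy * Wout2 with hV
  have ha0 : (0:ℝ) ≤ ‖W‖ := norm_nonneg _
  have ha : ‖W‖ < 1 := hnorm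
  have hb : (0:ℝ) ≤ ‖V‖ := norm_nonneg _
  set a : ℝ := ‖W‖ with haa
  set b : ℝ := ‖V‖ with hbb
  have hD : 0 < 1 - a^2 := by nlinarith
  set d : ℝ := 2*b^2/(1-a^2)+1 with hd
  have hd1 : (1:ℝ) ≤ d := by
    have h0 : 0 ≤ 2*b^2/(1-a^2) := div_nonneg (by positivity) hD.le
    rw [hd]; linarith
  -- diagonal of ones is the identity
  have hdiag : (Matrix.diagonal (fun _ => (1:ℝ)) : Matrix (Fin ν) (Fin ν) ℝ) = 1 := by
    simp [Matrix.diagonal_one]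
  -- quadratic form of P
  have hPquad : ∀ v : Fin ν ⊕ Fin m → ℝ,
      v ⬝ᵥ ((Matrix.fromBlocks (Matrix.diagonal (fun _ => (1:ℝ))) 0 0
        (d • (1 : Matrix (Fin m) (Fin m) ℝ))) *ᵥ v)
      = (v ∘ Sum.inl) ⬝ᵥ (v ∘ Sum.inl) + d * ((v ∘ Sum.inr) ⬝ᵥ (v ∘ Sum.inr)) := by
    intro v
    have hv : v = Sum.elim (v ∘ Sum.inl) (v ∘ Sum.inr) := by
      ext i; cases i <;> rfl
    rw [fromBlocks_mulVec, hdiag]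
    simp only [Matrix.zero_mulVec, add_zero, zero_add, Matrix.one_mulVec,
      Matrix.smul_mulVec, Matrix.one_mulVec]
    conv_lhs => rw [hv]
    rw [sumElim_dotProduct_sumElim, dotProduct_smul, smul_eq_mul]
    simp
  -- nonvanishing of a block
  have hne : ∀ v : Fin ν ⊕ Fin m → ℝ, v ≠ 0 → (v ∘ Sum.inl) ≠ 0 ∨ (v ∘ Sum.inr) ≠ 0 := by
    intro v hv
    by_contra h
    push_neg at h
    apply hv
    ext i
    cases i with
    | inl i => exact congrFun h.1 i
    | inr i => exact congrFun h.2 i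
  refine ⟨fun _ => 1, d • (1 : Matrix (Fin m) (Fin m) ℝ), ?_, ⟨?_, ?_⟩, ?_⟩
  · rw [Matrix.transpose_smul, Matrix.transpose_one]
  · simp [Matrix.fromBlocks_transpose, Matrix.diagonal_transpose, Matrix.transpose_smul,
      Matrix.transpose_one]
  · -- positive definiteness
    intro v hv
    rw [hPquad v]
    set x := v ∘ Sum.inl
    set y := v ∘ Sum.inr
    have hx := dot_self_nonneg x
    have hy := dot_self_nonneg y
    rcases hne v hv with h | h
    · have : 0 < x ⬝ᵥ x :=
        hx.lt_of_ne (fun h0 => h (dotProduct_self_eq_zero.mp h0.symm))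
      nlinarith
    · have : 0 < y ⬝ᵥ y :=
        hy.lt_of_ne (fun h0 => h (dotProduct_self_eq_zero.mp h0.symm))
      nlinarith
  · -- negative definiteness
    intro v hv
    set x := v ∘ Sum.inl with hx
    set y := v ∘ Sum.inr with hy
    set P : Matrix (Fin ν ⊕ Fin m) (Fin ν ⊕ Fin m) ℝ :=
      Matrix.fromBlocks (Matrix.diagonal (fun _ => (1:ℝ))) 0 0
        (d • (1 : Matrix (Fin m) (Fin m) ℝ)) with hP
    set A : Matrix (Fin ν ⊕ Fin m) (Fin ν ⊕ Fin m) ℝ := Matrix.fromBlocks W V 0 0 with hA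
    set w : Fin ν → ℝ := W *ᵥ x + V *ᵥ y with hw
    have hAv : A *ᵥ v = Sum.elim w 0 := by
      rw [hA, fromBlocks_mulVec]
      simp [hw, hx, hy]
    have hquadA : v ⬝ᵥ ((Aᵀ * P * A) *ᵥ v) = w ⬝ᵥ w := by
      rw [← Matrix.mulVec_mulVec, ← Matrix.mulVec_mulVec, Matrix.dotProduct_mulVec,
        Matrix.vecMul_transpose, hAv]
      rw [hP, fromBlocks_mulVec, hdiag]
      simp only [Sum.elim_comp_inl, Sum.elim_comp_inr, Matrix.zero_mulVec, add_zero, zero_add,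
        Matrix.one_mulVec, Matrix.mulVec_zero, Matrix.smul_mulVec, smul_zero]
      rw [sumElim_dotProduct_sumElim]
      simp
    rw [Matrix.sub_mulVec, dotProduct_sub, hquadA, hPquad v]
    -- now scalar estimates
    set s : ℝ := ‖(WithLp.equiv 2 (Fin ν → ℝ)).symm x‖ with hs
    set t : ℝ := ‖(WithLp.equiv 2 (Fin m → ℝ)).symm y‖ with ht
    have hs0 : 0 ≤ s := norm_nonneg _
    have ht0 : 0 ≤ t := norm_nonneg _
    have hst : 0 < s ∨ 0 < t := by
      rcases hne v hv with h | h
      · exact Or.inl (norm_pos_of_ne h)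
      · exact Or.inr (norm_pos_of_ne h)
    have hxx : x ⬝ᵥ x = s^2 := dot_self_eq_norm_sq x
    have hyy : y ⬝ᵥ y = t^2 := dot_self_eq_norm_sq y
    have hwnorm : ‖(WithLp.equiv 2 (Fin ν → ℝ)).symm w‖ ≤ a*s + b*t := by
      rw [hw, WithLp.equiv_symm_apply, WithLp.toLp_add]
      exact le_trans (norm_add_le _ _)
        (add_le_add (mulVec_norm_le W x) (mulVec_norm_le V y))
    have hww : w ⬝ᵥ w ≤ (a*s + b*t)^2 := by
      rw [dot_self_eq_norm_sq w]
      exact pow_le_pow_left₀ (norm_nonneg _) hwnorm 2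
    have hkey := scalar_key ha0 ha hb hs0 ht0 hst
    rw [hxx, hyy]
    rw [hd]
    linarith [hww, hkey]
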